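/- arXiv:2401.02368 — 3 statements merged into one kernel-verified Lean document; each statement's English description precedes it below -/
import Mathlib

section
/- For every n ≥ 1, the state φ admits no tensor-product decomposition φ = φ_S ⊗ φ_{S̄} across any bipartition of the 2n tensor factors into a nonempty set S and its nonempty complement S̄ (i.e., φ is entangled across every cut). -/
noncomputable section

/-- Configurations of a line of `2n` particles, grouped into `n` consecutive pairs,
where pair `k` consists of particle `2k+1` (dimension 4) and particle `2k+2` (dimension 2)
(1-based numbering).  A vector of the chain Hilbert space `⊗_{i=1}^{2n} ℋ_i` is a function
`Conf n → ℂ`. -/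
abbrev Conf (n : ℕ) := Fin n → Fin 4 × Fin 2

/-- Particles of the chain: `(k, false)` is the `ℂ⁴` particle of pair `k` (particle `2k+1`),
`(k, true)` is the `ℂ²` particle of pair `k` (particle `2k+2`). -/
abbrev Particle (n : ℕ) := Fin n × Bool

/-- `f : Conf n → ℂ` depends only on the particles in `S`. -/
def DependsOnlyOn {n : ℕ} (S : Set (Particle n)) (f : Conf n → ℂ) : Prop :=
  ∀ x y : Conf n,
    (∀ k : Fin n, ((k, false) ∈ S → (x k).1 = (y k).1) ∧ ((k, true) ∈ S → (x k).2 = (y k).2)) →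
    f x = f y

/-- `ψ` admits a tensor-product decomposition `ψ = ψ_S ⊗ ψ_{S̄}` across the bipartition
`S / Sᶜ` of the `2n` tensor factors. -/
def ProductAcross {n : ℕ} (S : Set (Particle n)) (ψ : Conf n → ℂ) : Prop :=
  ∃ f g : Conf n → ℂ,
    DependsOnlyOn S f ∧ DependsOnlyOn Sᶜ g ∧ ∀ x, ψ x = f x * g x

/-- `ψ` is entangled across every cut: it admits no tensor-product decomposition across any
bipartition of the `2n` tensor factors into a nonempty set and its nonempty complement. -/
def EntangledAllCuts {n : ℕ} (ψ : Conf n → ℂ) : Prop :=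
  ∀ S : Set (Particle n), S.Nonempty → Sᶜ.Nonempty → ¬ ProductAcross S ψ

/-- Amplitudes of the pair state `|*⟩ = (1/√2)(|2⟩|0⟩ + |3⟩|1⟩)` on `ℂ⁴ ⊗ ℂ²`. -/
def starCoeff (c : Fin 4 × Fin 2) : ℂ :=
  if c = (2, 0) then (Real.sqrt 2)⁻¹ else if c = (3, 1) then (Real.sqrt 2)⁻¹ else 0

/-- Amplitudes of the pair state `|1⟩|0⟩ + |2⟩|1⟩` on `ℂ⁴ ⊗ ℂ²`. -/
def midCoeff (c : Fin 4 × Fin 2) : ℂ :=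
  if c = (1, 0) then 1 else if c = (2, 1) then 1 else 0

/-- Amplitudes of the pair state `|0⟩|0⟩` on `ℂ⁴ ⊗ ℂ²`. -/
def zeroCoeff (c : Fin 4 × Fin 2) : ℂ := if c = (0, 0) then 1 else 0

/-- The (unnormalized) state
`φ = Σ_{k=1}^{n} |*⟩^{⊗(k−1)} ⊗ (|1⟩|0⟩ + |2⟩|1⟩) ⊗ (|0⟩|0⟩)^{⊗(n−k)}`. -/
def phiState (n : ℕ) : Conf n → ℂ := fun x =>
  ∑ k : Fin n, ∏ j : Fin n,
    (if j < k then starCoeff (x j) else if j = k then midCoeff (x j) else zeroCoeff (x j))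

open scoped Classical

/-- Mix two configurations along the cut `S`. -/
noncomputable def mix {n : ℕ} (S : Set (Particle n)) (x y : Conf n) : Conf n :=
  fun k => (if (k, false) ∈ S then (x k).1 else (y k).1,
            if (k, true) ∈ S then (x k).2 else (y k).2)

lemma dep_mix_left {n : ℕ} {S : Set (Particle n)} {f : Conf n → ℂ}
    (hf : DependsOnlyOn S f) (x y : Conf n) : f (mix S x y) = f x := by
  apply hf
  intro k
  exact ⟨fun h => by simp [mix, h], fun h => by simp [mix, h]⟩

lemma dep_mix_right {n : ℕ} {S : Set (Particle n)} {g : Conf n → ℂ}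
    (hg : DependsOnlyOn Sᶜ g) (x y : Conf n) : g (mix S x y) = g y := by
  apply hg
  intro k
  refine ⟨fun h => ?_, fun h => ?_⟩ <;>
    · have h' := Set.mem_compl_iff _ _ |>.mp h
      simp [mix, h']

lemma key {n : ℕ} {S : Set (Particle n)} {f g : Conf n → ℂ}
    (hf : DependsOnlyOn S f) (hg : DependsOnlyOn Sᶜ g)
    (h : ∀ x, phiState n x = f x * g x) (x y : Conf n) :
    phiState n (mix S x y) * phiState n (mix S y x) = phiState n x * phiState n y := by
  rw [h, h, h, h, dep_mix_left hf, dep_mix_right hg, dep_mix_left hf, dep_mix_right hg]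
  ring

lemma phi_zero_no_mid {n : ℕ} (x : Conf n) (h : ∀ j, midCoeff (x j) = 0) :
    phiState n x = 0 := by
  unfold phiState
  refine Finset.sum_eq_zero fun k _ => ?_
  refine Finset.prod_eq_zero (Finset.mem_univ k) ?_
  simp [h k]

lemma phi_zero_two {n : ℕ} (x : Conf n) (a b : Fin n) (hab : a < b)
    (ha : starCoeff (x a) = 0) (hb : zeroCoeff (x b) = 0) :
    phiState n x = 0 := by
  unfold phiState
  refine Finset.sum_eq_zero fun k _ => ?_
  rcases lt_or_ge a k with h | h
  · refine Finset.prod_eq_zero (Finset.mem_univ a) ?_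
    rw [if_pos h]; exact ha
  · refine Finset.prod_eq_zero (Finset.mem_univ b) ?_
    have hkb : k < b := lt_of_le_of_lt h hab
    rw [if_neg (not_lt_of_gt hkb), if_neg (ne_of_gt hkb)]
    exact hb

/-- Configuration supporting the `a`-th summand, with `m` at pair `a`. -/
def conf {n : ℕ} (a : Fin n) (m : Fin 4 × Fin 2) : Conf n :=
  fun j => if j < a then ((2 : Fin 4), (0 : Fin 2)) else if j = a then m else ((0 : Fin 4), (0 : Fin 2))

lemma conf_self {n : ℕ} (a : Fin n) (m : Fin 4 × Fin 2) : conf a m a = m := by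
  simp [conf]

lemma star20 : starCoeff ((2 : Fin 4), (0 : Fin 2)) = (Real.sqrt 2 : ℂ)⁻¹ := by
  simp [starCoeff]

lemma star_ne : (starCoeff ((2 : Fin 4), (0 : Fin 2))) ≠ 0 := by
  rw [star20]
  have : (Real.sqrt 2 : ℝ) ≠ 0 := by positivity
  exact inv_ne_zero (by exact_mod_cast this)

lemma mid_vals (c : Fin 4 × Fin 2) (h1 : c ≠ (1, 0)) (h2 : c ≠ (2, 1)) : midCoeff c = 0 := by
  simp [midCoeff, h1, h2]

lemma phi_conf_ne {n : ℕ} (a : Fin n) (m : Fin 4 × Fin 2)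
    (hm : midCoeff m ≠ 0) (hz : zeroCoeff m = 0) (hs : starCoeff m = 0) :
    phiState n (conf a m) ≠ 0 := by
  unfold phiState
  rw [Finset.sum_eq_single a]
  · rw [Finset.prod_ne_zero_iff]
    intro j _
    rcases lt_trichotomy j a with h | h | h
    · rw [if_pos h]
      have : conf a m j = ((2 : Fin 4), (0 : Fin 2)) := by simp [conf, h]
      rw [this]; exact star_ne
    · subst h
      rw [if_neg (lt_irrefl j), if_pos rfl, conf_self]
      exact hm
    · rw [if_neg (not_lt_of_gt h), if_neg (ne_of_gt h)]
      have : conf a m j = ((0 : Fin 4), (0 : Fin 2)) := by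
        simp [conf, not_lt_of_gt h, ne_of_gt h]
      rw [this]
      simp [zeroCoeff]
  · intro k _ hka
    refine Finset.prod_eq_zero (Finset.mem_univ a) ?_
    rcases lt_or_gt_of_ne hka with h | h
    · rw [if_neg (not_lt_of_gt h), if_neg (ne_of_gt h), conf_self]
      exact hz
    · rw [if_pos h, conf_self]
      exact hs
  · intro h
    exact absurd (Finset.mem_univ a) h

lemma m1_mid : midCoeff ((1 : Fin 4), (0 : Fin 2)) ≠ 0 := by simp [midCoeff]
lemma m1_zero : zeroCoeff ((1 : Fin 4), (0 : Fin 2)) = 0 := by simp [zeroCoeff]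
lemma m1_star : starCoeff ((1 : Fin 4), (0 : Fin 2)) = 0 := by simp [starCoeff]
lemma m2_mid : midCoeff ((2 : Fin 4), (1 : Fin 2)) ≠ 0 := by simp [midCoeff]
lemma m2_zero : zeroCoeff ((2 : Fin 4), (1 : Fin 2)) = 0 := by simp [zeroCoeff]
lemma m2_star : starCoeff ((2 : Fin 4), (1 : Fin 2)) = 0 := by simp [starCoeff]

lemma phi_mix_conf_zero {n : ℕ} (S : Set (Particle n)) (k0 : Fin n)
    (m m' : Fin 4 × Fin 2)
    (h1 : mix S (conf k0 m) (conf k0 m') k0 ≠ ((1 : Fin 4), (0 : Fin 2)))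
    (h2 : mix S (conf k0 m) (conf k0 m') k0 ≠ ((2 : Fin 4), (1 : Fin 2))) :
    phiState n (mix S (conf k0 m) (conf k0 m')) = 0 := by
  apply phi_zero_no_mid
  intro j
  rcases eq_or_ne j k0 with rfl | hj
  · exact mid_vals _ h1 h2
  · have hxy : conf k0 m' j = conf k0 m j := by simp [conf, hj]
    have e : mix S (conf k0 m) (conf k0 m') j = conf k0 m j := by
      simp [mix, hxy]
    rw [e]
    by_cases hlt : j < k0
    · have h' : conf k0 m j = ((2 : Fin 4), (0 : Fin 2)) := by simp [conf, hlt]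
      rw [h']; exact mid_vals _ (by decide) (by decide)
    · have h' : conf k0 m j = ((0 : Fin 4), (0 : Fin 2)) := by simp [conf, hlt, hj]
      rw [h']; exact mid_vals _ (by decide) (by decide)

theorem stmt_1 (n : ℕ) (hn : 1 ≤ n) : EntangledAllCuts (phiState n) := by
  rintro S hS hSc ⟨f, g, hf, hg, hfg⟩
  by_cases hsplit : ∀ k : Fin n, ((k, false) ∈ S ↔ (k, true) ∈ S)
  · -- every pair is unsplit
    obtain ⟨⟨k, s⟩, hk⟩ := hS
    obtain ⟨⟨k', s'⟩, hk'⟩ := hSc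
    have hkf : (k, false) ∈ S := by
      cases s with
      | false => exact hk
      | true => exact (hsplit k).mpr hk
    have hkt : (k, true) ∈ S := (hsplit k).mp hkf
    have hk'f : (k', false) ∉ S := by
      cases s' with
      | false => exact hk'
      | true => exact fun h => hk' ((hsplit k').mp h)
    have hk't : (k', true) ∉ S := fun h => hk'f ((hsplit k').mpr h)
    have hne : k ≠ k' := fun h => hk'f (h ▸ hkf)
    rcases lt_or_gt_of_ne hne with hlt | hgt
    · have h0 := key hf hg hfg (conf k ((1 : Fin 4), (0 : Fin 2)))
        (conf k' ((1 : Fin 4), (0 : Fin 2)))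
      have hz : phiState n (mix S (conf k ((1 : Fin 4), (0 : Fin 2)))
          (conf k' ((1 : Fin 4), (0 : Fin 2)))) = 0 := by
        apply phi_zero_two _ k k' hlt
        · have e : mix S (conf k ((1 : Fin 4), (0 : Fin 2)))
              (conf k' ((1 : Fin 4), (0 : Fin 2))) k = ((1 : Fin 4), (0 : Fin 2)) := by
            simp [mix, hkf, hkt, conf_self]
          rw [e]; exact m1_star
        · have e : mix S (conf k ((1 : Fin 4), (0 : Fin 2)))
              (conf k' ((1 : Fin 4), (0 : Fin 2))) k' = ((1 : Fin 4), (0 : Fin 2)) := by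
            simp [mix, hk'f, hk't, conf_self]
          rw [e]; exact m1_zero
      rw [hz, zero_mul] at h0
      exact (mul_ne_zero (phi_conf_ne k _ m1_mid m1_zero m1_star)
        (phi_conf_ne k' _ m1_mid m1_zero m1_star)) h0.symm
    · have h0 := key hf hg hfg (conf k' ((1 : Fin 4), (0 : Fin 2)))
        (conf k ((1 : Fin 4), (0 : Fin 2)))
      have hz : phiState n (mix S (conf k ((1 : Fin 4), (0 : Fin 2)))
          (conf k' ((1 : Fin 4), (0 : Fin 2)))) = 0 := by
        apply phi_zero_two _ k' k hgt
        · have e : mix S (conf k ((1 : Fin 4), (0 : Fin 2)))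
              (conf k' ((1 : Fin 4), (0 : Fin 2))) k' = ((1 : Fin 4), (0 : Fin 2)) := by
            simp [mix, hk'f, hk't, conf_self]
          rw [e]; exact m1_star
        · have e : mix S (conf k ((1 : Fin 4), (0 : Fin 2)))
              (conf k' ((1 : Fin 4), (0 : Fin 2))) k = ((1 : Fin 4), (0 : Fin 2)) := by
            simp [mix, hkf, hkt, conf_self]
          rw [e]; exact m1_zero
      rw [hz, mul_zero] at h0
      exact (mul_ne_zero (phi_conf_ne k' _ m1_mid m1_zero m1_star)
        (phi_conf_ne k _ m1_mid m1_zero m1_star)) h0.symm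
  · -- some pair is split
    rw [not_forall] at hsplit
    obtain ⟨k0, hk0⟩ := hsplit
    have h0 := key hf hg hfg (conf k0 ((1 : Fin 4), (0 : Fin 2)))
      (conf k0 ((2 : Fin 4), (1 : Fin 2)))
    by_cases hc : (k0, false) ∈ S <;> by_cases hc' : (k0, true) ∈ S
    · exact absurd (iff_of_true hc hc') hk0
    · have e : mix S (conf k0 ((1 : Fin 4), (0 : Fin 2)))
          (conf k0 ((2 : Fin 4), (1 : Fin 2))) k0 = ((1 : Fin 4), (1 : Fin 2)) := by
        simp [mix, hc, hc', conf_self]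
      have hz := phi_mix_conf_zero S k0 _ _ (by rw [e]; decide) (by rw [e]; decide)
      rw [hz, zero_mul] at h0
      exact (mul_ne_zero (phi_conf_ne k0 _ m1_mid m1_zero m1_star)
        (phi_conf_ne k0 _ m2_mid m2_zero m2_star)) h0.symm
    · have e : mix S (conf k0 ((1 : Fin 4), (0 : Fin 2)))
          (conf k0 ((2 : Fin 4), (1 : Fin 2))) k0 = ((2 : Fin 4), (0 : Fin 2)) := by
        simp [mix, hc, hc', conf_self]
      have hz := phi_mix_conf_zero S k0 _ _ (by rw [e]; decide) (by rw [e]; decide)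
      rw [hz, zero_mul] at h0
      exact (mul_ne_zero (phi_conf_ne k0 _ m1_mid m1_zero m1_star)
        (phi_conf_ne k0 _ m2_mid m2_zero m2_star)) h0.symm
    · exact absurd (iff_of_false hc hc') hk0
end
end

section
/- Under the stated hypotheses, for every i ∈ {1,…,m−1}, every j ∈ {1,…,d}, and all complex coefficients a₁,…,a_m, the vector ψ = Σ_{k=1}^{m} a_k · L_k α_{kj} satisfies ⟨ψ, h_{v_i, u_{i+1}}(V_i) ψ⟩ = |a_i − a_{i+1}|². -/
open Matrix Kronecker

noncomputable section

/-- The transition term `h_{s,t}(W) = I⊗|s⟩⟨s| + I⊗|t⟩⟨t| − W†⊗|s⟩⟨t| − W⊗|t⟩⟨s|`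
on the space `A ⊗ C`, where `A = ℂ^d` and `C` is the clock space with basis `𝒯`. -/
def hGadget {𝒯 : Type*} [Fintype 𝒯] [DecidableEq 𝒯] {d : ℕ}
    (W : Matrix (Fin d) (Fin d) ℂ) (s t : 𝒯) : Matrix (Fin d × 𝒯) (Fin d × 𝒯) ℂ :=
  (1 : Matrix (Fin d) (Fin d) ℂ) ⊗ₖ Matrix.single s s (1 : ℂ) +
  (1 : Matrix (Fin d) (Fin d) ℂ) ⊗ₖ Matrix.single t t (1 : ℂ) -
  Wᴴ ⊗ₖ Matrix.single s t (1 : ℂ) -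
  W ⊗ₖ Matrix.single t s (1 : ℂ)

/-- `chainProd d U V i` is the product `V_{i−1} U_{i−1} ⋯ V₀ U₀` (0-based), i.e., the unitary
mapping `α_j` to `α_{ij}`. -/
def chainProd (d : ℕ) (U V : ℕ → Matrix (Fin d) (Fin d) ℂ) :
    ℕ → Matrix (Fin d) (Fin d) ℂ
  | 0 => 1
  | k + 1 => V k * U k * chainProd d U V k

lemma kron_quad {𝒯 : Type*} [Fintype 𝒯] [DecidableEq 𝒯] {d : ℕ}
    (W : Matrix (Fin d) (Fin d) ℂ) (s t : 𝒯) (φ ψ : Fin d × 𝒯 → ℂ) :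
    φ ⬝ᵥ (W ⊗ₖ Matrix.single s t (1:ℂ)).mulVec ψ
      = (fun a => φ (a, s)) ⬝ᵥ W.mulVec (fun b => ψ (b, t)) := by
  simp [dotProduct, Matrix.mulVec, Matrix.single, Fintype.sum_prod_type,
    mul_ite, ite_mul, ite_and, Finset.mul_sum, Finset.sum_mul, Finset.sum_ite_eq,
    mul_comm, mul_left_comm]

lemma star_mulVec_dot {d : ℕ} (A B : Matrix (Fin d) (Fin d) ℂ) (x y : Fin d → ℂ) :
    star (A.mulVec x) ⬝ᵥ (B.mulVec y) = star x ⬝ᵥ ((Aᴴ * B).mulVec y) := by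
  rw [Matrix.dotProduct_mulVec, Matrix.dotProduct_mulVec, Matrix.star_mulVec,
    ← Matrix.vecMul_vecMul]

lemma chainProd_unitary (d : ℕ) (U V : ℕ → Matrix (Fin d) (Fin d) ℂ) (k : ℕ)
    (hU : ∀ l < k, (U l)ᴴ * U l = 1) (hV : ∀ l < k, (V l)ᴴ * V l = 1) :
    (chainProd d U V k)ᴴ * chainProd d U V k = 1 := by
  induction k with
  | zero => simp [chainProd]
  | succ n ih =>
    have h1 : (chainProd d U V n)ᴴ * chainProd d U V n = 1 :=
      ih (fun l hl => hU l (by omega)) (fun l hl => hV l (by omega))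
    have hUn := hU n (by omega)
    have hVn := hV n (by omega)
    calc (chainProd d U V (n+1))ᴴ * chainProd d U V (n+1)
        = (chainProd d U V n)ᴴ * ((U n)ᴴ * ((V n)ᴴ * V n) * U n) * chainProd d U V n := by
          simp [chainProd, Matrix.conjTranspose_mul, mul_assoc]
      _ = 1 := by rw [hVn, mul_one, hUn, mul_one, h1]

theorem stmt_7 (𝒯 : Type) [Fintype 𝒯] [DecidableEq 𝒯] (d m : ℕ)
    (hd : 1 ≤ d) (hm : 1 ≤ m)
    (K : ℕ → Finset 𝒯) (u v : ℕ → 𝒯)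
    (L : ℕ → Matrix (Fin d × 𝒯) (Fin d) ℂ) (lam : ℕ → ℝ)
    (U V : ℕ → Matrix (Fin d) (Fin d) ℂ)
    -- the `K i` partition the clock basis
    (hKdisj : ∀ i < m, ∀ j < m, i ≠ j → Disjoint (K i) (K j))
    (hKcover : ∀ t : 𝒯, ∃ i < m, t ∈ K i)
    (hKne : ∀ i < m, (K i).Nonempty)
    (hu : ∀ i < m, u i ∈ K i) (hv : ∀ i < m, v i ∈ K i) (huv : ∀ i < m, u i ≠ v i)
    -- `L i : A → 𝒦_i` with `L_i† L_i = λ_i • I` and `λ_i ≥ 1`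
    (hLsupp : ∀ i < m, ∀ (a : Fin d) (t : 𝒯) (b : Fin d), t ∉ K i → L i (a, t) b = 0)
    (hLiso : ∀ i < m, (L i)ᴴ * L i = (lam i : ℂ) • (1 : Matrix (Fin d) (Fin d) ℂ))
    (hlam : ∀ i < m, 1 ≤ lam i)
    -- `(I_A ⊗ ⟨u_i|) L_i = I_A` and `(I_A ⊗ ⟨v_i|) L_i = U_i` with `U_i` unitary
    (hLu : ∀ i < m, (fun a b => L i (a, u i) b) = (1 : Matrix (Fin d) (Fin d) ℂ))
    (hLv : ∀ i < m, (fun a b => L i (a, v i) b) = U i)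
    (hU : ∀ i < m, (U i)ᴴ * U i = 1 ∧ U i * (U i)ᴴ = 1)
    (hV : ∀ i < m - 1, (V i)ᴴ * V i = 1 ∧ V i * (V i)ᴴ = 1)
    (i : ℕ) (hi : i < m - 1) (j : Fin d) (a : ℕ → ℂ) :
    star (∑ k ∈ Finset.range m,
        a k • (L k).mulVec ((chainProd d U V k).mulVec (Pi.single j 1))) ⬝ᵥ
      (hGadget (V i) (v i) (u (i + 1))).mulVec
        (∑ k ∈ Finset.range m,
          a k • (L k).mulVec ((chainProd d U V k).mulVec (Pi.single j 1))) =
      ((‖a i - a (i + 1)‖ : ℝ) : ℂ) ^ 2 := by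
  have hm' : i < m := by omega
  have hi1 : i + 1 < m := by omega
  set ψ : Fin d × 𝒯 → ℂ := ∑ k ∈ Finset.range m,
      a k • (L k).mulVec ((chainProd d U V k).mulVec (Pi.single j 1)) with hψ
  set xi : Fin d → ℂ := (chainProd d U V i).mulVec (Pi.single j 1) with hxi
  set y : Fin d → ℂ := (U i).mulVec xi with hy
  set z : Fin d → ℂ := (V i).mulVec y with hz
  have hchain : (chainProd d U V (i+1)).mulVec (Pi.single j 1) = z := by
    rw [hz, hy, hxi, Matrix.mulVec_mulVec, Matrix.mulVec_mulVec]
    rfl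
  have hs : (fun b => ψ (b, v i)) = a i • y := by
    funext b
    rw [hψ]
    simp only [Finset.sum_apply, Pi.smul_apply, smul_eq_mul]
    rw [Finset.sum_eq_single i]
    · have hL : ∀ c, L i (b, v i) c = U i b c :=
        fun c => congrFun (congrFun (hLv i hm') b) c
      have h2 : ((L i).mulVec ((chainProd d U V i).mulVec (Pi.single j 1))) (b, v i)
          = ((U i).mulVec ((chainProd d U V i).mulVec (Pi.single j 1))) b := by
        simp [Matrix.mulVec, dotProduct, hL]
      rw [h2, ← hxi, ← hy]
    · intro k hk hki
      have hvk : v i ∉ K k := by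
        have hd := hKdisj i hm' k (Finset.mem_range.mp hk) (Ne.symm hki)
        exact fun hmem => (Finset.disjoint_left.mp hd (hv i hm')) hmem
      have h0 : ∀ c, L k (b, v i) c = 0 :=
        fun c => hLsupp k (Finset.mem_range.mp hk) b (v i) c hvk
      simp [Matrix.mulVec, dotProduct, h0]
    · intro h; exact absurd (Finset.mem_range.mpr hm') h
  have ht : (fun b => ψ (b, u (i+1))) = a (i+1) • z := by
    funext b
    rw [hψ]
    simp only [Finset.sum_apply, Pi.smul_apply, smul_eq_mul]
    rw [Finset.sum_eq_single (i+1)]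
    · have hL : ∀ c, L (i+1) (b, u (i+1)) c = (1 : Matrix (Fin d) (Fin d) ℂ) b c :=
        fun c => congrFun (congrFun (hLu (i+1) hi1) b) c
      have h2 : ((L (i+1)).mulVec ((chainProd d U V (i+1)).mulVec (Pi.single j 1))) (b, u (i+1))
          = ((1 : Matrix (Fin d) (Fin d) ℂ).mulVec
              ((chainProd d U V (i+1)).mulVec (Pi.single j 1))) b := by
        simp [Matrix.mulVec, dotProduct, hL]
      rw [h2, Matrix.one_mulVec, hchain]
    · intro k hk hki
      have hvk : u (i+1) ∉ K k := by
        have hd := hKdisj (i+1) hi1 k (Finset.mem_range.mp hk) (Ne.symm hki)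
        exact fun hmem => (Finset.disjoint_left.mp hd (hu (i+1) hi1)) hmem
      have h0 : ∀ c, L k (b, u (i+1)) c = 0 :=
        fun c => hLsupp k (Finset.mem_range.mp hk) b (u (i+1)) c hvk
      simp [Matrix.mulVec, dotProduct, h0]
    · intro h; exact absurd (Finset.mem_range.mpr hi1) h
  have hU' := (hU i hm').1
  have hV' := (hV i hi).1
  have hPP : (chainProd d U V i)ᴴ * chainProd d U V i = 1 :=
    chainProd_unitary d U V i (fun l hl => (hU l (by omega)).1)
      (fun l hl => (hV l (by omega)).1)
  have hee : star (Pi.single j 1 : Fin d → ℂ) ⬝ᵥ (Pi.single j 1) = (1 : ℂ) := by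
    simp [dotProduct, Pi.single_apply, apply_ite, mul_ite, ite_mul]
  have hxx : star xi ⬝ᵥ xi = 1 := by
    rw [hxi, star_mulVec_dot, hPP, Matrix.one_mulVec, hee]
  have hyy : star y ⬝ᵥ y = 1 := by
    rw [hy, star_mulVec_dot, hU', Matrix.one_mulVec, hxx]
  have hzz : star z ⬝ᵥ z = 1 := by
    rw [hz, star_mulVec_dot, hV', Matrix.one_mulVec, hyy]
  have hyz : star y ⬝ᵥ (V i)ᴴ.mulVec z = 1 := by
    rw [hz, Matrix.mulVec_mulVec, hV', Matrix.one_mulVec, hyy]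
  have expand : star ψ ⬝ᵥ (hGadget (V i) (v i) (u (i+1))).mulVec ψ
      = star (fun b => ψ (b, v i)) ⬝ᵥ
          (1 : Matrix (Fin d) (Fin d) ℂ).mulVec (fun b => ψ (b, v i))
        + star (fun b => ψ (b, u (i+1))) ⬝ᵥ
          (1 : Matrix (Fin d) (Fin d) ℂ).mulVec (fun b => ψ (b, u (i+1)))
        - star (fun b => ψ (b, v i)) ⬝ᵥ (V i)ᴴ.mulVec (fun b => ψ (b, u (i+1)))
        - star (fun b => ψ (b, u (i+1))) ⬝ᵥ (V i).mulVec (fun b => ψ (b, v i)) := by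
    unfold hGadget
    rw [Matrix.sub_mulVec, Matrix.sub_mulVec, Matrix.add_mulVec, dotProduct_sub,
      dotProduct_sub, dotProduct_add, kron_quad, kron_quad, kron_quad, kron_quad]
    rfl
  rw [expand, hs, ht]
  have habs : (((‖a i - a (i+1)‖ : ℝ)) : ℂ)^2
      = (starRingEnd ℂ) (a i - a (i+1)) * (a i - a (i+1)) := by
    rw [← Complex.ofReal_pow, Complex.sq_norm, Complex.normSq_eq_conj_mul_self]
  rw [habs]
  simp only [star_smul, smul_dotProduct, Matrix.mulVec_smul, dotProduct_smul,
    smul_eq_mul, RCLike.star_def, Matrix.one_mulVec]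
  rw [hyy, hzz, hyz]
  simp only [map_sub]
  ring
end
end

section
/- For all i, j ∈ {1,…,d}: (I_{α_ℓ β} ⊗ ⟨c_i*|_{α_r}) ψ_j = 0 if i ≠ j, and (I_{α_ℓ β} ⊗ ⟨c_i*|_{α_r}) ψ_i = √(1/6) · ( |0,0⟩_{α_ℓ}|2⟩_{β} + |0,1⟩_{α_ℓ}|0⟩_{β} ). -/
noncomputable section

/-- The bin space: basis `|c₁,c₂⟩` with `c₁ + c₂ ≤ B = 2d`. -/
abbrev Sig (d : ℕ) := {p : Fin (2 * d + 1) × Fin (2 * d + 1) // p.1.val + p.2.val ≤ 2 * d}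

/-- `ℂ^{d″} ⊗ ℂ³ ⊗ ℂ^{d″}`, with factors labeled `α_ℓ`, `β`, `α_r`. -/
abbrev Cfg (d : ℕ) := Sig d × Fin 3 × Sig d

/-- The number of red balls in a bin. -/
def n1 {d : ℕ} (s : Sig d) : ℕ := s.val.1.val

/-- The number of black balls in a bin. -/
def n2 {d : ℕ} (s : Sig d) : ℕ := s.val.2.val

/-- The set of valid configurations `C_i`: in total `c_{i,1} = 2i` red balls and
`c_{i,2} + 1 = 2d − 2i + 1` black balls. -/
def inC (d i : ℕ) (x : Cfg d) : Prop :=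
  n1 x.1 + n1 x.2.2 + (if x.2.1 = (1 : Fin 3) then 1 else 0) = 2 * i ∧
  n2 x.1 + n2 x.2.2 + (if x.2.1 = (2 : Fin 3) then 1 else 0) = (2 * d - 2 * i) + 1

instance {d i : ℕ} : DecidablePred (inC d i) := fun x => by unfold inC; infer_instance

/-- The set `C_i*` of configurations in `C_i` with `(l₁,l₂) = c_i*` or `(r₁,r₂) = c_i*`. -/
def isStar (d i : ℕ) (x : Cfg d) : Prop :=
  inC d i x ∧
    ((n1 x.1 = 2 * i ∧ n2 x.1 = 2 * d - 2 * i) ∨ (n1 x.2.2 = 2 * i ∧ n2 x.2.2 = 2 * d - 2 * i))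

instance {d i : ℕ} : DecidablePred (isStar d i) := fun x => by unfold isStar; infer_instance

/-- `|C_i ∖ C_i*|`. -/
def nstar (d i : ℕ) : ℕ :=
  (Finset.univ.filter (fun x : Cfg d => inC d i x ∧ ¬ isStar d i x)).card

/-- The logical state `ψ_i`, with weight `√(1/6)` on `C_i*` and `√(1/(3|C_i∖C_i*|))`
on `C_i ∖ C_i*`. -/
def psiB (d i : ℕ) : Cfg d → ℂ := fun x =>
  if isStar d i x then (Real.sqrt (1 / 6) : ℂ)
  else if inC d i x then (Real.sqrt (1 / (3 * (nstar d i : ℝ))) : ℂ)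
  else 0

/-- The penalized configurations of one bin/qutrit pair:
`|0,0⟩|0⟩`, `|0,B⟩|2⟩`, `|B,0⟩|1⟩`, and `|c₁,c₂⟩|2⟩` for `c₁+c₂ = B` with `c₁` odd. -/
def penal (d : ℕ) (p : Sig d × Fin 3) : Prop :=
  (n1 p.1 = 0 ∧ n2 p.1 = 0 ∧ p.2 = 0) ∨
  (n1 p.1 = 0 ∧ n2 p.1 = 2 * d ∧ p.2 = 2) ∨
  (n1 p.1 = 2 * d ∧ n2 p.1 = 0 ∧ p.2 = 1) ∨
  (n1 p.1 + n2 p.1 = 2 * d ∧ n1 p.1 % 2 = 1 ∧ p.2 = 2)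

instance {d : ℕ} : DecidablePred (penal d) := fun p => by unfold penal; infer_instance

/-- The sum of the penalty (rank-one) terms of `H_ball/2`. -/
def penMat (d : ℕ) : Matrix (Sig d × Fin 3) (Sig d × Fin 3) ℂ :=
  fun p q => if p = q ∧ penal d p then 1 else 0

/-- `(p, q)` is one of the transitions included in `H_ball/2`:
`((c₁,c₂,0),(c₁−1,c₂,1))` and `((c₁,c₂,2),(c₁−1,c₂+1,1))` for `c₁ > 0`, and
`((c₁,c₂,0),(c₁,c₂−1,1))` and `((c₁,c₂,1),(c₁+1,c₂−1,2))` for `c₂ > 0`. -/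
def isTrans (d : ℕ) (p q : Sig d × Fin 3) : Prop :=
  (p.2 = 0 ∧ q.2 = 1 ∧ 0 < n1 p.1 ∧ n1 q.1 = n1 p.1 - 1 ∧ n2 q.1 = n2 p.1) ∨
  (p.2 = 2 ∧ q.2 = 1 ∧ 0 < n1 p.1 ∧ n1 q.1 = n1 p.1 - 1 ∧ n2 q.1 = n2 p.1 + 1) ∨
  (p.2 = 0 ∧ q.2 = 1 ∧ 0 < n2 p.1 ∧ n1 q.1 = n1 p.1 ∧ n2 q.1 = n2 p.1 - 1) ∨
  (p.2 = 1 ∧ q.2 = 2 ∧ 0 < n2 p.1 ∧ n1 q.1 = n1 p.1 + 1 ∧ n2 q.1 = n2 p.1 - 1)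

instance {d : ℕ} (p q : Sig d × Fin 3) : Decidable (isTrans d p q) := by
  unfold isTrans; infer_instance

/-- `w̄_i = 1/(3·|C_i∖C_i*|)`. -/
def wbar (d i : ℕ) : ℝ := 1 / (3 * (nstar d i : ℝ))

/-- The pair of weights `(w_a, w_b)` used in the transition term
`T((a₁,a₂,m_a),(b₁,b₂,m_b))`: `(w_i*, w̄_i)` if `(a₁,a₂) = c_i*` for some `i ∈ {1,…,d}`,
`(w̄_i, w_i*)` if `(b₁,b₂) = c_i*` for some `i`, and `(1,1)` otherwise
(a pair `(c₁,c₂)` equals some `c_i*` iff `c₁ + c₂ = 2d`, `c₁` is even and `c₁ ≥ 2`). -/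
def wpair (d : ℕ) (a b : ℕ × ℕ) : ℝ × ℝ :=
  if a.1 + a.2 = 2 * d ∧ a.1 % 2 = 0 ∧ 2 ≤ a.1 then (1 / 6, wbar d (a.1 / 2))
  else if b.1 + b.2 = 2 * d ∧ b.1 % 2 = 0 ∧ 2 ≤ b.1 then (wbar d (b.1 / 2), 1 / 6)
  else (1, 1)

/-- The ball numbers of a bin, as a pair. -/
def pairOf {d : ℕ} (s : Sig d) : ℕ × ℕ := (n1 s, n2 s)

/-- Basis state of the bin/qutrit pair space. -/
def ketST {d : ℕ} (p : Sig d × Fin 3) : (Sig d × Fin 3) → ℂ := fun q => if q = p then 1 else 0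

/-- The vector `√(w_b)|a₁,a₂⟩|m_a⟩ − √(w_a)|b₁,b₂⟩|m_b⟩`. -/
def vT (d : ℕ) (a b : Sig d × Fin 3) : (Sig d × Fin 3) → ℂ :=
  (Real.sqrt (wpair d (pairOf a.1) (pairOf b.1)).2 : ℂ) • ketST a -
    (Real.sqrt (wpair d (pairOf a.1) (pairOf b.1)).1 : ℂ) • ketST b

/-- The transition term `T((a₁,a₂,m_a),(b₁,b₂,m_b))`. -/
def Tmat (d : ℕ) (a b : Sig d × Fin 3) : Matrix (Sig d × Fin 3) (Sig d × Fin 3) ℂ :=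
  Matrix.vecMulVec (vT d a b) (star (vT d a b))

/-- `H_ball/2` on `ℂ^{d″} ⊗ ℂ³`: the penalty terms plus all transition terms. -/
def Hhalf (d : ℕ) : Matrix (Sig d × Fin 3) (Sig d × Fin 3) ℂ :=
  penMat d + ∑ p : Sig d × Fin 3, ∑ q : Sig d × Fin 3,
    (if isTrans d p q then Tmat d p q else 0)

/-- `H_ball = (H_ball/2)_{α_ℓ β} + (H_ball/2)_{α_r β}` on `ℂ^{d″} ⊗ ℂ³ ⊗ ℂ^{d″}`. -/
def Hball (d : ℕ) : Matrix (Cfg d) (Cfg d) ℂ :=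
  (fun x y => if x.2.2 = y.2.2 then Hhalf d (x.1, x.2.1) (y.1, y.2.1) else 0) +
  (fun x y => if x.1 = y.1 then Hhalf d (x.2.2, x.2.1) (y.2.2, y.2.1) else 0)

/-- The bin basis state `c_i* = |2i, 2d − 2i⟩`. -/
def cstar (d i : ℕ) (hi : i ≤ d) : Sig d :=
  ⟨(⟨2 * i, by omega⟩, ⟨2 * d - 2 * i, by omega⟩), by show 2 * i + (2 * d - 2 * i) ≤ 2 * d; omega⟩

theorem stmt_17 (d i j : ℕ) (hd : 1 ≤ d)
    (hi1 : 1 ≤ i) (hi2 : i ≤ d) (hj1 : 1 ≤ j) (hj2 : j ≤ d) :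
    (i ≠ j → ∀ (l : Sig d) (m : Fin 3), psiB d j (l, m, cstar d i hi2) = 0) ∧
    (∀ (l : Sig d) (m : Fin 3),
      psiB d i (l, m, cstar d i hi2) =
        (Real.sqrt (1 / 6) : ℂ) *
          ((if n1 l = 0 ∧ n2 l = 0 ∧ m = 2 then 1 else 0) +
            (if n1 l = 0 ∧ n2 l = 1 ∧ m = 0 then 1 else 0))) := by
  have hc1 : n1 (cstar d i hi2) = 2 * i := rfl
  have hc2 : n2 (cstar d i hi2) = 2 * d - 2 * i := rfl
  constructor
  · intro hij l m
    have hnot : ¬ inC d j (l, m, cstar d i hi2) := by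
      rintro ⟨h1, h2⟩
      simp only [hc1, hc2] at h1 h2
      fin_cases m <;>
        all_goals (first
          | (simp [Fin.ext_iff] at h1 h2; omega)
          | (simp [Fin.ext_iff] at h1 h2)
          | omega)
    unfold psiB
    rw [if_neg (fun h => hnot h.1), if_neg hnot]
  · intro l m
    by_cases hC : inC d i (l, m, cstar d i hi2)
    · have hstar : isStar d i (l, m, cstar d i hi2) := ⟨hC, Or.inr ⟨hc1, hc2⟩⟩
      obtain ⟨h1, h2⟩ := hC
      simp only [hc1, hc2] at h1 h2
      unfold psiB
      rw [if_pos hstar]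
      fin_cases m
      · simp only [Fin.ext_iff] at h1 h2
        norm_num at h1 h2
        have e1 : n1 l = 0 := by omega
        have e2 : n2 l = 1 := by omega
        simp [Fin.ext_iff, e1, e2]
      · exfalso
        simp only [Fin.ext_iff] at h1
        norm_num at h1
        omega
      · simp only [Fin.ext_iff] at h1 h2
        norm_num at h1 h2
        have e1 : n1 l = 0 := by omega
        have e2 : n2 l = 0 := by omega
        simp [Fin.ext_iff, e1, e2]
    · have hns : ¬ isStar d i (l, m, cstar d i hi2) := fun h => hC h.1
      unfold psiB
      rw [if_neg hns, if_neg hC]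
      have hnc1 : ¬ (n1 l = 0 ∧ n2 l = 0 ∧ m = 2) := by
        rintro ⟨e1, e2, rfl⟩
        refine hC ⟨?_, ?_⟩ <;> simp [e1, e2, hc1, hc2, Fin.ext_iff] <;> omega
      have hnc2 : ¬ (n1 l = 0 ∧ n2 l = 1 ∧ m = 0) := by
        rintro ⟨e1, e2, rfl⟩
        refine hC ⟨?_, ?_⟩ <;> simp [e1, e2, hc1, hc2, Fin.ext_iff] <;> omega
      rw [if_neg hnc1, if_neg hnc2]
      ring
end
end
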